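/- Let Z be a set of 10 points in ℙ⁴ distributed two per line on 5 lines ℓ₁, …, ℓ₅ through a common point O ∉ Z, such that the union of any four of the lines spans ℙ⁴. Then no 5 points of Z are coplanar. -/

import Mathlib

noncomputable section

/-- The underlying vector space of ℙ⁴ over ℂ.  Lines of ℙ⁴ are 2-dimensional linear
subspaces; planes are 3-dimensional linear subspaces. -/
abbrev V5 : Type := Fin 5 → ℂ

/-- ℙ⁴ over ℂ. -/
abbrev P4 : Type := Projectivization ℂ V5

open Module

-- two distinct projective points have independent reps; a 2-dim subspace containing both
-- is contained in any subspace containing both reps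
lemma line_le {L W : Submodule ℂ V5} (hL : finrank ℂ L = 2) {x y : P4} (hxy : x ≠ y)
    (hxL : x.rep ∈ L) (hyL : y.rep ∈ L) (hxW : x.rep ∈ W) (hyW : y.rep ∈ W) : L ≤ W := by
  have hind : LinearIndependent ℂ (Projectivization.rep ∘ ![x, y]) :=
    Projectivization.independent_iff.1 ((Projectivization.independent_pair_iff_ne x y).2 hxy)
  set S : Submodule ℂ V5 := Submodule.span ℂ (Set.range (Projectivization.rep ∘ ![x, y]))
  have hrange : Set.range (Projectivization.rep ∘ ![x, y]) = {x.rep, y.rep} := by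
    simp only [Set.range_comp]
    have h1 : Set.range ![x, y] = {x, y} := by
      ext v; simp [Fin.exists_fin_two]; tauto
    rw [h1, Set.image_pair]
  have hSL : S ≤ L := by
    rw [Submodule.span_le, hrange]
    rintro v hv
    rcases hv with h | h <;> simp_all
  have hSW : S ≤ W := by
    rw [Submodule.span_le, hrange]
    rintro v hv
    rcases hv with h | h <;> simp_all
  have hfr : finrank ℂ S = 2 := by
    rw [finrank_span_eq_card hind]
    simp
  have : S = L := Submodule.eq_of_le_of_finrank_le hSL (by rw [hfr, hL])
  rwa [← this]

lemma contra (ℓ : Fin 5 → Submodule ℂ V5)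
    (hspan4 : ∀ s : Finset (Fin 5), s.card = 4 → (⨆ i ∈ s, ℓ i) = ⊤)
    (T4 : Finset (Fin 5)) (h4 : T4.card = 4) (W : Submodule ℂ V5)
    (hr : finrank ℂ W ≤ 4) (hle : ∀ i ∈ T4, ℓ i ≤ W) : False := by
  have htop : (⊤ : Submodule ℂ V5) ≤ W := by
    rw [← hspan4 T4 h4]
    exact iSup_le fun i => iSup_le fun hi => hle i hi
  have : finrank ℂ V5 ≤ finrank ℂ W := by
    rw [top_le_iff.1 htop, finrank_top]
  rw [Module.finrank_fintype_fun_eq_card] at this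
  simp at this
  omega

/-- Let `Z` be a set of 10 points in ℙ⁴ distributed two per line on 5 lines
`ℓ₁, …, ℓ₅` through a common point `O ∉ Z`, such that the union of any four of the
lines spans ℙ⁴.  Then no 5 points of `Z` are coplanar. -/
theorem stmt_10 (O : P4) (ℓ : Fin 5 → Submodule ℂ V5)
    (hdim : ∀ i, Module.finrank ℂ (ℓ i) = 2)
    (hO : ∀ i, O.rep ∈ ℓ i)
    (hspan4 : ∀ s : Finset (Fin 5), s.card = 4 → (⨆ i ∈ s, ℓ i) = ⊤)
    (Pt : Fin 5 → Fin 2 → P4)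
    (hPt : ∀ i k, (Pt i k).rep ∈ ℓ i)
    (hinj : Function.Injective (fun p : Fin 5 × Fin 2 => Pt p.1 p.2))
    (hne : ∀ i k, Pt i k ≠ O) :
    ¬ ∃ s : Finset (Fin 5 × Fin 2), s.card = 5 ∧
        ∃ W : Submodule ℂ V5, Module.finrank ℂ W ≤ 3 ∧
          ∀ p ∈ s, (Pt p.1 p.2).rep ∈ W := by
  rintro ⟨s, hs5, W, hW3, hWmem⟩
  set T := s.image Prod.fst with hT
  -- each fiber has at most 2 elements
  have hT3 : 3 ≤ T.card := by
    rw [hT]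
    have h := Finset.card_le_mul_card_image (f := Prod.fst) s 2 ?_
    · omega
    · intro a _
      have hsub : (s.filter fun x => x.1 = a) ⊆ {(a, 0), (a, 1)} := by
        intro p hp
        simp only [Finset.mem_filter] at hp
        rcases p with ⟨p1, p2⟩
        fin_cases p2 <;> simp_all
      have := Finset.card_le_card hsub
      have h2 : ({(a, 0), (a, 1)} : Finset (Fin 5 × Fin 2)).card ≤ 2 :=
        le_trans (Finset.card_insert_le _ _) (by simp)
      omega
  have hptW : ∀ i ∈ T, ∃ k, (Pt i k).rep ∈ W := by
    intro i hi
    rw [hT, Finset.mem_image] at hi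
    obtain ⟨p, hp, hpi⟩ := hi
    subst hpi
    exact ⟨p.2, hWmem p hp⟩
  by_cases h4 : 4 ≤ T.card
  · -- case A: at least 4 lines involved
    obtain ⟨T4, hT4sub, hT4⟩ := Finset.exists_subset_card_eq h4
    set W' := W ⊔ (ℂ ∙ O.rep) with hW'
    have hrw' : Module.finrank ℂ W' ≤ 4 := by
      rw [hW']
      have h1 := Submodule.finrank_add_le_finrank_add_finrank W (ℂ ∙ O.rep)
      have h2 : Module.finrank ℂ (ℂ ∙ O.rep) = 1 :=
        finrank_span_singleton O.rep_nonzero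
      omega
    refine contra ℓ hspan4 T4 hT4 W' hrw' ?_
    intro i hi
    obtain ⟨k, hk⟩ := hptW i (hT4sub hi)
    exact line_le (hdim i) (hne i k) (hPt i k) (hO i)
      (Submodule.mem_sup_left hk) (Submodule.mem_sup_right (Submodule.mem_span_singleton_self _))
  · -- case B: exactly 3 lines; some line has two points of s
    have hTcard : T.card = 3 := by omega
    have hlt : T.card < s.card := by omega
    obtain ⟨p, hp, q, hq, hpq, hfst⟩ :=
      Finset.exists_ne_map_eq_of_card_lt_of_maps_to hlt
        (fun p hp => Finset.mem_image_of_mem Prod.fst hp)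
    have hPtne : Pt p.1 p.2 ≠ Pt q.1 q.2 := fun h => hpq (hinj h)
    -- the line ℓ p.1 is contained in W
    have hlineW : ℓ p.1 ≤ W :=
      line_le (hdim p.1) hPtne (hPt p.1 p.2) (hfst ▸ hPt q.1 q.2)
        (hWmem p hp) (hWmem q hq)
    have hOW : O.rep ∈ W := hlineW (hO p.1)
    -- all lines of T are in W
    have hallW : ∀ i ∈ T, ℓ i ≤ W := by
      intro i hi
      obtain ⟨k, hk⟩ := hptW i hi
      exact line_le (hdim i) (hne i k) (hPt i k) (hO i) hk hOW
    -- pick j not in T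
    have : ∃ j, j ∉ T := by
      by_contra h
      push_neg at h
      have : (Finset.univ : Finset (Fin 5)) ⊆ T := fun j _ => h j
      have := Finset.card_le_card this
      simp [hTcard] at this
    obtain ⟨j, hj⟩ := this
    set W'' := W ⊔ ℓ j with hW''
    have hrw'' : Module.finrank ℂ W'' ≤ 4 := by
      rw [hW'']
      have h1 := Submodule.finrank_sup_add_finrank_inf_eq W (ℓ j)
      have h2 : 1 ≤ Module.finrank ℂ ↥(W ⊓ ℓ j) := by
        have hle : (ℂ ∙ O.rep) ≤ W ⊓ ℓ j :=
          (Submodule.span_singleton_le_iff_mem _ _).2 (Submodule.mem_inf.2 ⟨hOW, hO j⟩)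
        have := Submodule.finrank_mono hle
        rw [finrank_span_singleton O.rep_nonzero] at this
        omega
      have h3 := hdim j
      omega
    refine contra ℓ hspan4 (insert j T) ?_ W'' hrw'' ?_
    · rw [Finset.card_insert_of_notMem hj, hTcard]
    · intro i hi
      rcases Finset.mem_insert.1 hi with h | h
      · rw [h]; exact le_sup_right
      · exact (hallW i h).trans le_sup_left
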